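/- Let d ≥ 2 and M ≥ 2 be integers, ω = exp(2πi/d), and for a rational ν let X(ν) be the d×d matrix with X(ν)_{n+1,n} = ω^{−ν} (0 ≤ n ≤ d−2), X(ν)_{0,d−1} = ω^{−ν(1−d)}, and all other entries zero, where ω^{x} = exp(2πi x/d). Let ψ = (1/√d) Σ_{k=0}^{d−1} e_k ⊗ e_k ⊗ e_k ∈ ℂ^d ⊗ ℂ^d ⊗ ℂ^d be the tripartite generalized GHZ state. Then for every integer n with 1 ≤ n ≤ d−1 and all η₁, η₂, η₃ ∈ {0, …, M−1} with η₁ + η₂ + η₃ ≡ 0 (mod M), the state ψ is an eigenvector of X(η₁/M)^n ⊗ X(η₂/M)^n ⊗ X(η₃/M)^n with eigenvalue ω^{−n(η₁+η₂+η₃)/M} = exp(−2πi n (η₁+η₂+η₃)/(M d)); in particular the correlation function Eⁿ(η₁,η₂,η₃) = ⟨ψ| X(η₁/M)^n ⊗ X(η₂/M)^n ⊗ X(η₃/M)^n |ψ⟩ equals ω^{−n(η₁+η₂+η₃)/M}. -/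

import Mathlib

open Matrix Kronecker

/-- The `d × d` matrix `X(ν)`: the cyclic shift conjugated by the phase shift
`P_ν`, with entries `X(ν)_{n+1,n} = ω^{-ν}` for `0 ≤ n ≤ d-2`,
`X(ν)_{0,d-1} = ω^{-ν(1-d)}`, and zero elsewhere, where
`ω^x = exp(2πi·x/d)`. -/
noncomputable def Xmat (d : ℕ) (ν : ℚ) : Matrix (Fin d) (Fin d) ℂ :=
  Matrix.of fun i j : Fin d =>
    if (i : ℕ) = (j : ℕ) + 1 then
      Complex.exp (2 * Real.pi * Complex.I * (-(ν : ℂ)) / d)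
    else if (i : ℕ) = 0 ∧ (j : ℕ) = d - 1 then
      Complex.exp (2 * Real.pi * Complex.I * (-(ν : ℂ) * (1 - (d : ℂ))) / d)
    else 0

open Fin.NatCast

lemma Xmat_col (d : ℕ) [NeZero d] (ν : ℚ) (j : Fin d) :
    Xmat d ν *ᵥ Pi.single j 1 =
      Complex.exp (2 * Real.pi * Complex.I * (-(ν:ℂ)) *
        (1 - d * (if (j:ℕ) = d - 1 then 1 else 0)) / d) •
        (Pi.single (j+1) 1 : Fin d → ℂ) := by
  have hd : 0 < d := Nat.pos_of_ne_zero (NeZero.ne d)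
  funext i
  rw [Matrix.mulVec_single_one]
  have hv : ((j + 1 : Fin d) : ℕ) = (j.val + 1) % d := by
    rw [Fin.val_add, Fin.val_one', Nat.add_mod j.val (1 % d) d, Nat.mod_mod_of_dvd,
      ← Nat.add_mod]
    exact dvd_rfl
  simp only [Xmat, Matrix.col_apply, Matrix.of_apply, Pi.smul_apply, Pi.single_apply, smul_eq_mul, mul_one]
  by_cases h1 : (i:ℕ) = j.val + 1
  · have hj : ¬ ((j:ℕ) = d - 1) := by have := i.isLt; omega
    have hij : i = j + 1 := Fin.ext (by rw [hv, Nat.mod_eq_of_lt (by have := i.isLt; omega)]; exact h1)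
    rw [if_pos h1, if_pos hij, mul_one, if_neg hj]
    congr 1; ring
  · by_cases h2 : (i:ℕ) = 0 ∧ (j:ℕ) = d - 1
    · have hd1 : j.val + 1 = d := by have := j.isLt; omega
      have hm : (j.val + 1) % d = 0 := by rw [hd1, Nat.mod_self]
      have hij : i = j + 1 := Fin.ext (by rw [hv, hm]; exact h2.1)
      rw [if_neg h1, if_pos h2, if_pos hij, mul_one, if_pos h2.2]
      congr 1; ring
    · have hij : i ≠ j + 1 := by
        intro h
        have hiv : (i:ℕ) = (j.val + 1) % d := by rw [h, hv]
        rcases Nat.lt_or_ge (j.val + 1) d with hlt | hge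
        · rw [Nat.mod_eq_of_lt hlt] at hiv; exact h1 hiv
        · have hd1 : j.val + 1 = d := by have := j.isLt; omega
          have : (i:ℕ) = 0 := by rw [hiv, hd1, Nat.mod_self]
          exact h2 ⟨this, by have := j.isLt; omega⟩
      rw [if_neg h1, if_neg h2, if_neg hij, mul_zero]

lemma fin_val_add_one (d : ℕ) [NeZero d] (j : Fin d) :
    ((j + 1 : Fin d) : ℕ) = (j.val + 1) % d := by
  rw [Fin.val_add, Fin.val_one', Nat.add_mod j.val (1 % d) d, Nat.mod_mod_of_dvd,
    ← Nat.add_mod]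
  exact dvd_rfl

lemma Xmat_pow_col (d : ℕ) [NeZero d] (ν : ℚ) (n : ℕ) (j : Fin d) :
    (Xmat d ν ^ n) *ᵥ Pi.single j 1 =
      Complex.exp (2 * Real.pi * Complex.I * (-(ν:ℂ)) *
        ((n : ℂ) - d * ((((j : ℕ) + n) / d : ℕ) : ℂ)) / d) •
        (Pi.single (j + (n : Fin d)) 1 : Fin d → ℂ) := by
  have hd : 0 < d := Nat.pos_of_ne_zero (NeZero.ne d)
  induction n generalizing j with
  | zero =>
      simp only [pow_zero, Nat.add_zero, Nat.div_eq_of_lt j.isLt, Nat.cast_zero,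
        mul_zero, sub_zero, zero_div, mul_zero, Complex.exp_zero, one_smul,
        Nat.cast_zero, add_zero, Matrix.one_mulVec]
  | succ n ih =>
      rw [pow_succ, ← Matrix.mulVec_mulVec, Xmat_col, Matrix.mulVec_smul, ih,
        smul_smul, ← Complex.exp_add]
      have hw : (if (j:ℕ) = d - 1 then 1 else 0) + (((j+1 : Fin d) : ℕ) + n) / d
          = ((j:ℕ) + (n + 1)) / d := by
        by_cases hj : (j:ℕ) = d - 1
        · rw [if_pos hj, fin_val_add_one]
          have h1 : (j.val + 1) % d = 0 := by
            have : j.val + 1 = d := by omega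
            rw [this, Nat.mod_self]
          rw [h1, hj]
          have : d - 1 + (n + 1) = n + d := by omega
          rw [this, Nat.add_div_right _ hd, Nat.zero_add]
          omega
        · rw [if_neg hj, fin_val_add_one]
          have hlt : j.val + 1 < d := by have := j.isLt; omega
          rw [Nat.mod_eq_of_lt hlt, Nat.zero_add]
          congr 1
          omega
      have hifc : (if (j:ℕ) = d - 1 then (1:ℂ) else 0)
          = ((if (j:ℕ) = d - 1 then 1 else 0 : ℕ) : ℂ) := by split <;> simp
      congr 1
      · rw [hifc, ← add_div]
        congr 1
        rw [← hw]
        push_cast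
        ring
      · congr 1
        push_cast
        abel

lemma kron_single {m n' : Type*} [Fintype m] [Fintype n'] [DecidableEq m] [DecidableEq n']
    (A : Matrix m m ℂ) (B : Matrix n' n' ℂ) (j₁ p : m) (j₂ q : n') (a b : ℂ)
    (hA : A *ᵥ Pi.single j₁ 1 = a • (Pi.single p 1 : m → ℂ))
    (hB : B *ᵥ Pi.single j₂ 1 = b • (Pi.single q 1 : n' → ℂ)) :
    (A ⊗ₖ B) *ᵥ Pi.single (j₁, j₂) 1 = (a * b) • (Pi.single (p, q) 1 : m × n' → ℂ) := by
  funext x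
  obtain ⟨i₁, i₂⟩ := x
  have hA' := congrFun hA i₁
  have hB' := congrFun hB i₂
  rw [Matrix.mulVec_single_one] at hA' hB'
  simp only [Matrix.col_apply, Pi.smul_apply, Pi.single_apply, smul_eq_mul, mul_one] at hA' hB'
  rw [Matrix.mulVec_single_one]
  simp only [Matrix.col_apply, Matrix.kroneckerMap_apply, Pi.smul_apply, Pi.single_apply, smul_eq_mul, mul_one]
  rw [hA', hB']
  by_cases h1 : i₁ = p <;> by_cases h2 : i₂ = q <;>
    simp [h1, h2, Prod.ext_iff] <;> ring

lemma phase_key (d M : ℕ) (hd : 2 ≤ d) (hM : 2 ≤ M) (n : ℕ)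
    (η₁ η₂ η₃ s w : ℕ) (hs : η₁ + η₂ + η₃ = M * s) :
    Complex.exp (2 * Real.pi * Complex.I * (-(((η₁ : ℚ)/M : ℚ):ℂ)) *
        ((n : ℂ) - d * (w : ℂ)) / d) *
      (Complex.exp (2 * Real.pi * Complex.I * (-(((η₂ : ℚ)/M : ℚ):ℂ)) *
        ((n : ℂ) - d * (w : ℂ)) / d) *
      Complex.exp (2 * Real.pi * Complex.I * (-(((η₃ : ℚ)/M : ℚ):ℂ)) *
        ((n : ℂ) - d * (w : ℂ)) / d)) =
      Complex.exp (-(2 * Real.pi * Complex.I * n * ((η₁ : ℂ) + η₂ + η₃)) / (M * d)) := by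
  have hM0 : (M : ℂ) ≠ 0 := by
    exact_mod_cast Nat.cast_ne_zero.mpr (by omega)
  have hd0 : (d : ℂ) ≠ 0 := by
    exact_mod_cast Nat.cast_ne_zero.mpr (by omega)
  have hsC : (η₁ : ℂ) + η₂ + η₃ = (M : ℂ) * s := by exact_mod_cast hs
  rw [← Complex.exp_add, ← Complex.exp_add]
  rw [show 2 * Real.pi * Complex.I * (-(((η₁ : ℚ)/M : ℚ):ℂ)) * ((n : ℂ) - d * (w : ℂ)) / d +
      (2 * Real.pi * Complex.I * (-(((η₂ : ℚ)/M : ℚ):ℂ)) * ((n : ℂ) - d * (w : ℂ)) / d +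
       2 * Real.pi * Complex.I * (-(((η₃ : ℚ)/M : ℚ):ℂ)) * ((n : ℂ) - d * (w : ℂ)) / d)
      = -(2 * Real.pi * Complex.I * n * ((η₁ : ℂ) + η₂ + η₃)) / (M * d)
        + ((s * w : ℕ) : ℂ) * (2 * Real.pi * Complex.I) from by
    push_cast
    field_simp
    linear_combination ((d : ℂ) * (w : ℂ)) * hsC]
  rw [Complex.exp_add, Complex.exp_nat_mul_two_pi_mul_I, mul_one]

/-- **The GHZ state is an eigenvector of the composite observables.**
For `1 ≤ n ≤ d-1` and settings `η₁, η₂, η₃ ∈ {0, …, M-1}` with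
`M ∣ η₁ + η₂ + η₃`, the tripartite generalized GHZ state
`ψ = (1/√d) Σ_k e_k ⊗ e_k ⊗ e_k` is an eigenvector of
`X(η₁/M)^n ⊗ X(η₂/M)^n ⊗ X(η₃/M)^n` with eigenvalue
`exp(-2πi n (η₁+η₂+η₃)/(M d))`; in particular the correlation function
`Eⁿ(η₁,η₂,η₃) = ⟨ψ| X(η₁/M)^n ⊗ X(η₂/M)^n ⊗ X(η₃/M)^n |ψ⟩` equals that
eigenvalue. -/
theorem ghz_eigenvector_of_composite_observable
    (d M : ℕ) (hd : 2 ≤ d) (hM : 2 ≤ M)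
    (ψ : Fin d × Fin d × Fin d → ℂ)
    (hψ : ψ = (1 / (Real.sqrt d : ℂ)) •
      ∑ k : Fin d, (Pi.single (k, k, k) (1 : ℂ) : Fin d × Fin d × Fin d → ℂ))
    (n : ℕ) (hn1 : 1 ≤ n) (hn2 : n ≤ d - 1)
    (η₁ η₂ η₃ : ℕ) (h₁ : η₁ < M) (h₂ : η₂ < M) (h₃ : η₃ < M)
    (hsum : M ∣ η₁ + η₂ + η₃) :
    ((Xmat d ((η₁ : ℚ) / M) ^ n) ⊗ₖ
        ((Xmat d ((η₂ : ℚ) / M) ^ n) ⊗ₖ (Xmat d ((η₃ : ℚ) / M) ^ n))) *ᵥ ψ =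
      Complex.exp (-(2 * Real.pi * Complex.I * n * ((η₁ : ℂ) + η₂ + η₃)) / (M * d)) • ψ ∧
    star ψ ⬝ᵥ
        (((Xmat d ((η₁ : ℚ) / M) ^ n) ⊗ₖ
            ((Xmat d ((η₂ : ℚ) / M) ^ n) ⊗ₖ (Xmat d ((η₃ : ℚ) / M) ^ n))) *ᵥ ψ) =
      Complex.exp (-(2 * Real.pi * Complex.I * n * ((η₁ : ℂ) + η₂ + η₃)) / (M * d)) := by
  haveI : NeZero d := ⟨by omega⟩
  obtain ⟨s, hs⟩ := hsum
  have hcol : ∀ k : Fin d,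
      ((Xmat d ((η₁ : ℚ) / M) ^ n) ⊗ₖ
        ((Xmat d ((η₂ : ℚ) / M) ^ n) ⊗ₖ (Xmat d ((η₃ : ℚ) / M) ^ n))) *ᵥ
        (Pi.single (k, k, k) 1 : Fin d × Fin d × Fin d → ℂ)
      = Complex.exp (-(2 * Real.pi * Complex.I * n * ((η₁ : ℂ) + η₂ + η₃)) / (M * d)) •
        (Pi.single (k + (n : Fin d), (k + (n : Fin d), k + (n : Fin d))) 1 :
          Fin d × Fin d × Fin d → ℂ) := by
    intro k
    have h23 := kron_single _ _ k (k + (n : Fin d)) k (k + (n : Fin d)) _ _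
      (Xmat_pow_col d ((η₂ : ℚ) / M) n k) (Xmat_pow_col d ((η₃ : ℚ) / M) n k)
    have h123 := kron_single _ _ k (k + (n : Fin d)) (k, k)
      (k + (n : Fin d), k + (n : Fin d)) _ _
      (Xmat_pow_col d ((η₁ : ℚ) / M) n k) h23
    rw [h123, phase_key d M hd hM n η₁ η₂ η₃ s (((k : ℕ) + n) / d) hs]
  have h1 :
      ((Xmat d ((η₁ : ℚ) / M) ^ n) ⊗ₖ
        ((Xmat d ((η₂ : ℚ) / M) ^ n) ⊗ₖ (Xmat d ((η₃ : ℚ) / M) ^ n))) *ᵥ ψ =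
      Complex.exp (-(2 * Real.pi * Complex.I * n * ((η₁ : ℂ) + η₂ + η₃)) / (M * d)) • ψ := by
    rw [hψ, Matrix.mulVec_smul]
    rw [smul_comm (Complex.exp (-(2 * Real.pi * Complex.I * n * ((η₁ : ℂ) + η₂ + η₃)) / (M * d)))
      (1 / (Real.sqrt d : ℂ))]
    congr 1
    rw [← Matrix.mulVecLin_apply, map_sum]
    simp only [Matrix.mulVecLin_apply, hcol]
    rw [← Finset.smul_sum]
    congr 1
    exact Equiv.sum_comp (Equiv.addRight ((n : Fin d)))
      (fun k => (Pi.single (k, k, k) 1 : Fin d × Fin d × Fin d → ℂ))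
  refine ⟨h1, ?_⟩
  rw [h1, dotProduct_smul, smul_eq_mul]
  have hdpos : (0:ℝ) < d := by positivity
  have hsd : Real.sqrt d ≠ 0 := ne_of_gt (Real.sqrt_pos.mpr (by exact_mod_cast (by omega : 0 < d)))
  have hnorm : star ψ ⬝ᵥ ψ = 1 := by
    rw [hψ]
    have hstar : star (∑ k : Fin d, (Pi.single (k, k, k) (1:ℂ) : Fin d × Fin d × Fin d → ℂ))
        = ∑ k : Fin d, (Pi.single (k, k, k) (1:ℂ) : Fin d × Fin d × Fin d → ℂ) := by
      funext x
      simp [Finset.sum_apply, Pi.single_apply, apply_ite (star : ℂ → ℂ)]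
    rw [star_smul, hstar, smul_dotProduct, dotProduct_smul,
      smul_eq_mul, smul_eq_mul]
    have hcomm : ∀ (u : (Fin d × Fin d × Fin d) → ℂ)
        (f : Fin d → (Fin d × Fin d × Fin d) → ℂ),
        (∑ k, f k) ⬝ᵥ u = ∑ k, f k ⬝ᵥ u := by
      intro u f
      simp only [dotProduct, Finset.sum_apply, Finset.sum_mul]
      exact Finset.sum_comm
    rw [hcomm]
    simp only [single_dotProduct, one_mul, Finset.sum_apply, Pi.single_apply,
      Prod.mk.injEq, and_self]
    have hS : (∑ k : Fin d, ∑ k' : Fin d, if (k : Fin d) = k' then (1:ℂ) else 0) = d := by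
      simp [Finset.sum_ite_eq]
    rw [hS]
    have hc : ((Real.sqrt d : ℝ) : ℂ) * ((Real.sqrt d : ℝ) : ℂ) = (d : ℂ) := by
      rw [← Complex.ofReal_mul, Real.mul_self_sqrt hdpos.le]
      norm_cast
    simp only [Complex.star_def, map_div₀, _root_.map_one, Complex.conj_ofReal]
    have hsdC : ((Real.sqrt d : ℝ) : ℂ) ≠ 0 := by exact_mod_cast hsd
    field_simp
    linear_combination -hc
  rw [hnorm, mul_one]
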